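/- For all ranked interpretations R1 and R2: if R1 ≺_PT R2, then R1 ≺_LM R2. -/

import Mathlib

attribute [local instance] Classical.propDecidable

universe u

/-- Sentences of Propositional Typicality Logic over atoms `P`. -/
inductive PTL (P : Type u) : Type u
  | atom : P → PTL P
  | neg  : PTL P → PTL P
  | conj : PTL P → PTL P → PTL P
  | top  : PTL P
  | bot  : PTL P
  | typ  : PTL P → PTL P

namespace PTL

/-- Material implication, defined from `¬` and `∧`. -/
def impl {P : Type u} (a b : PTL P) : PTL P := neg (conj a (neg b))

/-- Disjunction, defined from `¬` and `∧`. -/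
def disj {P : Type u} (a b : PTL P) : PTL P := neg (conj (neg a) (neg b))

/-- Purely propositional sentences: no occurrence of the typicality operator. -/
def IsProp {P : Type u} : PTL P → Prop
  | atom _ => True
  | neg a => IsProp a
  | conj a b => IsProp a ∧ IsProp b
  | top => True
  | bot => True
  | typ _ => False

end PTL

/-- Propositional valuations. -/
abbrev Val (P : Type u) := P → Bool

/-- Satisfaction of a PTL sentence by a valuation, relative to a ranking
function `rho : Val P → ℕ∞`. -/
def satR {P : Type u} (rho : Val P → ℕ∞) : Val P → PTL P → Prop
  | v, PTL.atom p => v p = true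
  | v, PTL.neg a => ¬ satR rho v a
  | v, PTL.conj a b => satR rho v a ∧ satR rho v b
  | _, PTL.top => True
  | _, PTL.bot => False
  | v, PTL.typ a => satR rho v a ∧ ∀ v', rho v' < rho v → ¬ satR rho v' a

/-- The convexity property of ranking functions. -/
def RkConvex {P : Type u} (rho : Val P → ℕ∞) : Prop :=
  ∀ (v : Val P) (i : ℕ), rho v = (i : ℕ∞) → ∀ j : ℕ, j < i → ∃ v', rho v' = (j : ℕ∞)

/-- A ranked interpretation: a convex ranking function on valuations. -/
structure RankedInterp (P : Type u) where
  rk : Val P → ℕ∞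
  convex : RkConvex rk

/-- `rho` is a ranked model of `a`: every possible valuation satisfies `a`. -/
def modelsR {P : Type u} (rho : Val P → ℕ∞) (a : PTL P) : Prop :=
  ∀ v, rho v < ⊤ → satR rho v a

/-- `R ⊨ a`. -/
def RankedInterp.models {P : Type u} (R : RankedInterp P) (a : PTL P) : Prop :=
  modelsR R.rk a

/-- `R` is a ranked model of the knowledge base `K`. -/
def modelsSet {P : Type u} (R : RankedInterp P) (K : Set (PTL P)) : Prop :=
  ∀ a ∈ K, R.models a

/-- Ranked entailment consequences of `K`. -/
def Cn0 {P : Type u} (K : Set (PTL P)) : Set (PTL P) :=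
  {a | ∀ R : RankedInterp P, modelsSet R K → R.models a}

/-- The cell of rank `i` of a ranking function. -/
def cell {P : Type u} (rho : Val P → ℕ∞) (i : ℕ∞) : Set (Val P) :=
  {u | rho u = i}

/-- The LM preference `⪯_LM` on ranking functions: either all cells coincide,
or the cell of the first differing (finite) rank shrinks. -/
def LMle {P : Type u} (rho1 rho2 : Val P → ℕ∞) : Prop :=
  (∀ i : ℕ∞, cell rho1 i = cell rho2 i) ∨
  ∃ j : ℕ, (∀ k : ℕ, k < j → cell rho1 (k : ℕ∞) = cell rho2 (k : ℕ∞)) ∧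
    cell rho1 (j : ℕ∞) ≠ cell rho2 (j : ℕ∞) ∧ cell rho2 (j : ℕ∞) ⊆ cell rho1 (j : ℕ∞)

/-- Strict LM preference. -/
def LMlt {P : Type u} (rho1 rho2 : Val P → ℕ∞) : Prop :=
  LMle rho1 rho2 ∧ ¬ LMle rho2 rho1

/-- The PT preference `⪯_PT` on ranking functions: pointwise comparison. -/
def PTle {P : Type u} (rho1 rho2 : Val P → ℕ∞) : Prop :=
  ∀ w, rho1 w ≤ rho2 w

/-- Strict PT preference. -/
def PTlt {P : Type u} (rho1 rho2 : Val P → ℕ∞) : Prop :=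
  PTle rho1 rho2 ∧ ¬ PTle rho2 rho1

/-- strict PT preference implies strict LM preference. -/
theorem ptl_PTlt_implies_LMlt {P : Type u} [Fintype P] [DecidableEq P]
    (R1 R2 : RankedInterp P) :
    PTlt R1.rk R2.rk → LMlt R1.rk R2.rk := by
  rintro ⟨hle, hnle⟩
  simp only [PTle, not_forall, not_le] at hnle
  obtain ⟨w, hw⟩ := hnle
  have hwt : R1.rk w ≠ ⊤ := (hw.trans_le le_top).ne
  obtain ⟨m, hm⟩ := WithTop.ne_top_iff_exists.mp hwt
  have hdiff : ∃ n : ℕ, cell R1.rk (n : ℕ∞) ≠ cell R2.rk (n : ℕ∞) := by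
    refine ⟨m, fun h => ?_⟩
    have hw1 : w ∈ cell R1.rk (m : ℕ∞) := hm.symm
    rw [h] at hw1
    have : R2.rk w = (m : ℕ∞) := hw1
    rw [this, ← hm] at hw
    exact lt_irrefl _ hw
  set j := Nat.find hdiff with hjdef
  have hj : cell R1.rk (j : ℕ∞) ≠ cell R2.rk (j : ℕ∞) := Nat.find_spec hdiff
  have hmin : ∀ k : ℕ, k < j → cell R1.rk (k : ℕ∞) = cell R2.rk (k : ℕ∞) := by
    intro k hk
    have := Nat.find_min hdiff hk
    exact not_not.mp this
  have hsub : cell R2.rk (j : ℕ∞) ⊆ cell R1.rk (j : ℕ∞) := by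
    intro u hu
    have hu2 : R2.rk u = (j : ℕ∞) := hu
    have h1 : R1.rk u ≤ (j : ℕ∞) := hu2 ▸ hle u
    have h1t : R1.rk u ≠ ⊤ := fun h => by simp [h] at h1
    obtain ⟨k, hk⟩ := WithTop.ne_top_iff_exists.mp h1t
    have hkj : k ≤ j := by
      rw [← hk] at h1; exact Nat.cast_le.mp h1
    rcases lt_or_eq_of_le hkj with hlt | heq
    · exfalso
      have hu1 : u ∈ cell R1.rk (k : ℕ∞) := hk.symm
      rw [hmin k hlt] at hu1
      have : R2.rk u = (k : ℕ∞) := hu1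
      rw [this] at hu2
      have : k = j := by exact_mod_cast hu2
      exact absurd this hlt.ne
    · show R1.rk u = (j : ℕ∞)
      simp [← hk, heq]; rfl
  constructor
  · exact Or.inr ⟨j, hmin, hj, hsub⟩
  · rintro (hall | ⟨j', hmin', hne', hsub'⟩)
    · exact hj (hall (j : ℕ∞)).symm
    · have hjj : j' = j := by
        rcases lt_trichotomy j' j with h | h | h
        · exact absurd (hmin j' h).symm hne'
        · exact h
        · exact absurd (hmin' j h).symm hj
      subst hjj
      exact hj (Set.Subset.antisymm hsub' hsub)
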